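/- Let S and T be finite multisets of integers, each of whose elements is ≥ 2, and suppose ∑_{m∈S}(1 - 1/m) ≤ 2 and ∑_{m∈T}(1 - 1/m) ≤ 2 in ℚ. If ∑_{m∈S}(m + 1/m - 2) = ∑_{m∈T}(m + 1/m - 2), then S = T. -/

import Mathlib

set_option maxHeartbeats 1600000

namespace ConeOrderAux

lemma rp {m : ℤ} (hm : 2 ≤ m) : 0 < 1 / (m : ℚ) := by
  have h : (0:ℚ) < m := by exact_mod_cast (show (0:ℤ) < m by omega)
  positivity

lemma rh {m : ℤ} (hm : 2 ≤ m) : 1 / (m : ℚ) ≤ 1 / 2 := by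
  apply one_div_le_one_div_of_le (by norm_num)
  exact_mod_cast hm

lemma Fge {n : ℤ} (hn : 2 ≤ n) : 1/2 ≤ (n:ℚ) + 1/n - 2 := by
  rcases eq_or_lt_of_le hn with rfl | h3
  · norm_num
  · have h3' : (3:ℚ) ≤ n := by exact_mod_cast (show (3:ℤ) ≤ n by omega)
    have := rp hn
    linarith

lemma window {x y : ℚ} {k : ℤ} (hx0 : 0 < x) (hx1 : x ≤ 1)
    (hy0 : 0 < y) (hy1 : y ≤ 1) (h : x - y = (k:ℚ)) : x = y := by
  have h1 : (-1:ℤ) < k := by exact_mod_cast (show ((-1:ℤ):ℚ) < (k:ℚ) by push_cast; linarith)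
  have h2 : k < (1:ℤ) := by exact_mod_cast (show ((k:ℤ):ℚ) < ((1:ℤ):ℚ) by push_cast; linarith)
  have hk : k = 0 := by omega
  subst hk
  push_cast at h
  linarith

lemma rec_inj {m n : ℤ} (hm : 2 ≤ m) (hn : 2 ≤ n) (h : 1/(m:ℚ) = 1/n) : m = n := by
  have hm0 : (m:ℚ) ≠ 0 := by exact_mod_cast (show (m:ℤ) ≠ 0 by omega)
  have hn0 : (n:ℚ) ≠ 0 := by exact_mod_cast (show (n:ℤ) ≠ 0 by omega)
  field_simp at h
  exact_mod_cast (show (m:ℚ) = n by linarith)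

lemma lt_of_rec_lt {x a : ℤ} (hx : 2 ≤ x) (ha : 2 ≤ a) (h : 1/(a:ℚ) < 1/(x:ℚ)) : x < a := by
  by_contra hc
  push_neg at hc
  have : 1/(x:ℚ) ≤ 1/(a:ℚ) := by
    apply one_div_le_one_div_of_le
    · exact_mod_cast (show (0:ℤ) < a by omega)
    · exact_mod_cast hc
  linarith

lemma rec_sum_contra {x a b : ℤ} (hx : 2 ≤ x) (ha : 2 ≤ a) (hb : 2 ≤ b)
    (hr : 1/(x:ℚ) = 1/a + 1/b) (hs : a + b ≤ x + 3) : False := by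
  have h1 : 1/(a:ℚ) < 1/(x:ℚ) := by have := rp hb; linarith
  have h2 : 1/(b:ℚ) < 1/(x:ℚ) := by have := rp ha; linarith
  have ha' := lt_of_rec_lt hx ha h1
  have hb' := lt_of_rec_lt hx hb h2
  omega

lemma sing_sing {m n : ℤ} (hm : 2 ≤ m) (hn : 2 ≤ n)
    (h : (m:ℚ) + 1/m - 2 = (n:ℚ) + 1/n - 2) : m = n := by
  have key : 1/(m:ℚ) - 1/n = ((n - m : ℤ) : ℚ) := by push_cast; linarith
  have heq : 1/(m:ℚ) = 1/(n:ℚ) :=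
    window (rp hm) (by have := rh hm; linarith) (rp hn) (by have := rh hn; linarith) key
  exact rec_inj hm hn heq

lemma sing_pair {m a b : ℤ} (hm : 2 ≤ m) (ha : 2 ≤ a) (hb : 2 ≤ b)
    (h : (m:ℚ) + 1/m - 2 = ((a:ℚ) + 1/a - 2) + ((b:ℚ) + 1/b - 2)) : False := by
  have key : 1/(m:ℚ) - (1/a + 1/b) = ((a + b - m - 2 : ℤ) : ℚ) := by push_cast; linarith
  have heq : 1/(m:ℚ) = 1/(a:ℚ) + 1/b :=
    window (rp hm) (by have := rh hm; linarith)
      (by have := rp ha; have := rp hb; linarith)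
      (by have := rh ha; have := rh hb; linarith) key
  have hsum : (a:ℚ) + b = (m:ℚ) + 2 := by linarith
  have hsum' : a + b = m + 2 := by exact_mod_cast hsum
  exact rec_sum_contra hm ha hb heq (by omega)

lemma t22_sing {m n : ℤ} (hm : 2 ≤ m) (hn : 2 ≤ n)
    (h : 1 + ((m:ℚ) + 1/m - 2) = (n:ℚ) + 1/n - 2) : False := by
  have key : 1/(m:ℚ) - 1/n = ((n - m - 1 : ℤ) : ℚ) := by push_cast; linarith
  have heq : 1/(m:ℚ) = 1/(n:ℚ) :=
    window (rp hm) (by have := rh hm; linarith) (rp hn) (by have := rh hn; linarith) key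
  have := rec_inj hm hn heq
  have : ((n - m - 1 : ℤ) : ℚ) = 0 := by rw [← key]; linarith
  have : n - m - 1 = 0 := by exact_mod_cast this
  omega

lemma t22_pair {x a b : ℤ} (hx : 2 ≤ x) (ha : 2 ≤ a) (hb : 2 ≤ b)
    (h : 1 + ((x:ℚ) + 1/x - 2) = ((a:ℚ) + 1/a - 2) + ((b:ℚ) + 1/b - 2)) : False := by
  have key : 1/(x:ℚ) - (1/a + 1/b) = ((a + b - x - 3 : ℤ) : ℚ) := by push_cast; linarith
  have heq : 1/(x:ℚ) = 1/(a:ℚ) + 1/b :=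
    window (rp hx) (by have := rh hx; linarith)
      (by have := rp ha; have := rp hb; linarith)
      (by have := rh ha; have := rh hb; linarith) key
  have hsum : (a:ℚ) + b = (x:ℚ) + 3 := by linarith
  have hsum' : a + b = x + 3 := by exact_mod_cast hsum
  exact rec_sum_contra hx ha hb heq (by omega)

lemma pair_pair {m n a b : ℤ} (hm : 2 ≤ m) (hn : 2 ≤ n) (ha : 2 ≤ a) (hb : 2 ≤ b)
    (h : ((m:ℚ) + 1/m - 2) + ((n:ℚ) + 1/n - 2) = ((a:ℚ) + 1/a - 2) + ((b:ℚ) + 1/b - 2)) :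
    (m = a ∧ n = b) ∨ (m = b ∧ n = a) := by
  have key : (1/(m:ℚ) + 1/n) - (1/a + 1/b) = ((a + b - m - n : ℤ) : ℚ) := by push_cast; linarith
  have heq : 1/(m:ℚ) + 1/n = 1/(a:ℚ) + 1/b :=
    window (by have := rp hm; have := rp hn; linarith)
      (by have := rh hm; have := rh hn; linarith)
      (by have := rp ha; have := rp hb; linarith)
      (by have := rh ha; have := rh hb; linarith) key
  have hsumQ : (m:ℚ) + n = (a:ℚ) + b := by linarith
  have hsum : m + n = a + b := by exact_mod_cast hsumQ
  have hm0 : (m:ℚ) ≠ 0 := by exact_mod_cast (show (m:ℤ) ≠ 0 by omega)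
  have hn0 : (n:ℚ) ≠ 0 := by exact_mod_cast (show (n:ℤ) ≠ 0 by omega)
  have ha0 : (a:ℚ) ≠ 0 := by exact_mod_cast (show (a:ℤ) ≠ 0 by omega)
  have hb0 : (b:ℚ) ≠ 0 := by exact_mod_cast (show (b:ℤ) ≠ 0 by omega)
  have e1 : (1/(m:ℚ) + 1/n) * (m*n) = m + n := by field_simp; ring
  have e2 : (1/(a:ℚ) + 1/b) * (a*b) = a + b := by field_simp; ring
  have hr : 0 < 1/(a:ℚ) + 1/b := by have := rp ha; have := rp hb; linarith
  have h3 : (1/(a:ℚ) + 1/b) * ((m:ℚ)*n) = (1/(a:ℚ) + 1/b) * ((a:ℚ)*b) := by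
    conv_lhs => rw [← heq, e1]
    rw [e2]
    exact hsumQ
  have hprodQ : (m:ℚ) * n = (a:ℚ) * b := mul_left_cancel₀ (ne_of_gt hr) h3
  have hprod : m * n = a * b := by exact_mod_cast hprodQ
  have hz : (a - m) * (a - n) = 0 := by linear_combination (-a) * hsum + hprod
  rcases mul_eq_zero.mp hz with h4 | h4
  · left; constructor <;> omega
  · right; constructor <;> omega

def spor (v : ℚ) : Prop :=
  v = 19/6 ∨ v = 49/12 ∨ v = 151/30 ∨ v = 6 ∨ v = 5 ∨ v = 4 ∨ v = 2

lemma bound_of_le {m : ℤ} (hm : 2 ≤ m) (h : (m:ℚ) + 1/m - 2 ≤ 6) : m ≤ 7 := by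
  have hp := rp hm
  have h8 : (m:ℚ) < ((8:ℤ):ℚ) := by push_cast; linarith
  have : m < 8 := by exact_mod_cast h8
  omega

lemma sing_spor {m : ℤ} (hm : 2 ≤ m) (v : ℚ) (hv : spor v)
    (h : (m:ℚ) + 1/m - 2 = v) : False := by
  have hb : m ≤ 7 := bound_of_le hm (by rcases hv with rfl|rfl|rfl|rfl|rfl|rfl|rfl <;> linarith)
  interval_cases m <;> rcases hv with rfl|rfl|rfl|rfl|rfl|rfl|rfl <;> norm_num at h

lemma pair_spor {m n : ℤ} (hm : 2 ≤ m) (hn : 2 ≤ n) (v : ℚ) (hv : spor v)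
    (h : ((m:ℚ) + 1/m - 2) + ((n:ℚ) + 1/n - 2) = v) : False := by
  have hv6 : v ≤ 6 := by rcases hv with rfl|rfl|rfl|rfl|rfl|rfl|rfl <;> norm_num
  have hbm : m ≤ 7 := bound_of_le hm (by have := Fge hn; linarith)
  have hbn : n ≤ 7 := bound_of_le hn (by have := Fge hm; linarith)
  interval_cases m <;> interval_cases n <;>
    rcases hv with rfl|rfl|rfl|rfl|rfl|rfl|rfl <;> norm_num at h

lemma t22_spor {m : ℤ} (hm : 2 ≤ m) (v : ℚ) (hv : spor v)
    (h : 1 + ((m:ℚ) + 1/m - 2) = v) : False := by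
  have hv6 : v ≤ 6 := by rcases hv with rfl|rfl|rfl|rfl|rfl|rfl|rfl <;> norm_num
  have hb : m ≤ 7 := bound_of_le hm (by linarith)
  interval_cases m <;> rcases hv with rfl|rfl|rfl|rfl|rfl|rfl|rfl <;> norm_num at h

lemma rle' {m : ℤ} (k : ℚ) (hk : 0 < k) (h : k ≤ (m:ℚ)) : 1/(m:ℚ) ≤ 1/k :=
  one_div_le_one_div_of_le hk h



lemma coe_sum_eq (S : Multiset ℤ) :
    (S.map (fun m => 1 - 1 / (m : ℚ))).sum = (S.map (fun m : ℤ => 1 - 1 / (m:ℚ))).sum := by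
  induction S using Multiset.induction with
  | empty => rfl
  | cons a s ih => simp_all

lemma coe_sum_eq2 (S : Multiset ℤ) :
    (S.map (fun m => (m : ℚ) + 1 / m - 2)).sum = (S.map (fun m : ℤ => (m:ℚ) + 1/m - 2)).sum := by
  induction S using Multiset.induction with
  | empty => rfl
  | cons a s ih => simp_all

lemma classify (S : Multiset ℤ) (hS : ∀ m ∈ S, (2:ℤ) ≤ m)
    (hχ : (S.map (fun m : ℤ => 1 - 1 / (m : ℚ))).sum ≤ 2) :
    S = 0 ∨ (∃ m, 2 ≤ m ∧ S = {m}) ∨ (∃ m n, 2 ≤ m ∧ 2 ≤ n ∧ S = {m, n}) ∨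
    (∃ m, 2 ≤ m ∧ S = {2, 2, m}) ∨ S = {2,3,3} ∨ S = {2,3,4} ∨ S = {2,3,5} ∨
    S = {2,3,6} ∨ S = {2,4,4} ∨ S = {3,3,3} ∨ S = {2,2,2,2} := by
  have hhalf : ∀ m ∈ S, (1/2:ℚ) ≤ 1 - 1/m := fun m hm => by
    have := rh (hS m hm); linarith
  have hb : (S.map (fun _ : ℤ => (1/2:ℚ))).sum ≤ (S.map (fun m : ℤ => 1 - 1/(m:ℚ))).sum :=
    Multiset.sum_map_le_sum_map _ _ hhalf
  have hconst : (S.map (fun _ : ℤ => (1/2:ℚ))).sum = (Multiset.card S : ℚ) * (1/2:ℚ) := by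
    rw [Multiset.map_const', Multiset.sum_replicate, nsmul_eq_mul]
  have hcard : Multiset.card S ≤ 4 := by
    by_contra hc
    push_neg at hc
    have h5 : (5:ℚ) ≤ (Multiset.card S : ℚ) := by exact_mod_cast hc
    rw [hconst] at hb
    linarith
  obtain ⟨l, hl, hsort⟩ : ∃ l : List ℤ, (l : Multiset ℤ) = S ∧ l.Pairwise (· ≤ ·) :=
    ⟨S.sort (· ≤ ·), Multiset.sort_eq _ _, Multiset.pairwise_sort _ _⟩
  subst hl
  rw [Multiset.coe_card] at hcard
  rcases l with - | ⟨a, - | ⟨b, - | ⟨c, - | ⟨d, - | ⟨e, tl⟩⟩⟩⟩⟩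
  · exact Or.inl rfl
  · exact Or.inr (Or.inl ⟨a, hS a (by simp), rfl⟩)
  · exact Or.inr (Or.inr (Or.inl ⟨a, b, hS a (by simp), hS b (by simp), rfl⟩))
  -- triple case
  · have ha2 : (2:ℤ) ≤ a := hS a (by simp)
    have hb2 : (2:ℤ) ≤ b := hS b (by simp)
    have hc2 : (2:ℤ) ≤ c := hS c (by simp)
    simp [List.pairwise_cons] at hsort
    obtain ⟨⟨hab, hac⟩, hbc⟩ := hsort
    simp at hχ
    simp only [← one_div] at hχ
    have hsum : 1 ≤ 1/(a:ℚ) + 1/(b:ℚ) + 1/(c:ℚ) := by linarith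
    have ha3 : a ≤ 3 := by
      by_contra hx
      push_neg at hx
      have h1 := rle' (m := a) 4 (by norm_num) (by exact_mod_cast (show (4:ℤ) ≤ a by omega))
      have h2 := rle' (m := b) 4 (by norm_num) (by exact_mod_cast (show (4:ℤ) ≤ b by omega))
      have h3 := rle' (m := c) 4 (by norm_num) (by exact_mod_cast (show (4:ℤ) ≤ c by omega))
      linarith
    interval_cases a
    · -- a = 2
      by_cases hb2' : b = 2
      · subst hb2'
        exact Or.inr (Or.inr (Or.inr (Or.inl ⟨c, hc2, rfl⟩)))
      · have hb3 : (3:ℤ) ≤ b := by omega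
        have hb4 : b ≤ 4 := by
          by_contra hx
          push_neg at hx
          have h1 := rle' (m := b) 5 (by norm_num) (by exact_mod_cast (show (5:ℤ) ≤ b by omega))
          have h2 := rle' (m := c) 5 (by norm_num) (by exact_mod_cast (show (5:ℤ) ≤ c by omega))
          norm_num at hsum
          linarith
        interval_cases b
        · -- b = 3
          have hc6 : c ≤ 6 := by
            by_contra hx
            push_neg at hx
            have h1 := rle' (m := c) 7 (by norm_num) (by exact_mod_cast (show (7:ℤ) ≤ c by omega))
            norm_num at hsum
            linarith
          interval_cases c
          · exact Or.inr (Or.inr (Or.inr (Or.inr (Or.inl rfl))))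
          · exact Or.inr (Or.inr (Or.inr (Or.inr (Or.inr (Or.inl rfl)))))
          · exact Or.inr (Or.inr (Or.inr (Or.inr (Or.inr (Or.inr (Or.inl rfl))))))
          · exact Or.inr (Or.inr (Or.inr (Or.inr (Or.inr (Or.inr (Or.inr (Or.inl rfl)))))))
        · -- b = 4
          have hc4 : c ≤ 4 := by
            by_contra hx
            push_neg at hx
            have h1 := rle' (m := c) 5 (by norm_num) (by exact_mod_cast (show (5:ℤ) ≤ c by omega))
            norm_num at hsum
            linarith
          have : c = 4 := by omega
          subst this
          exact Or.inr (Or.inr (Or.inr (Or.inr (Or.inr (Or.inr (Or.inr (Or.inr (Or.inl rfl))))))))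
    · -- a = 3
      have hb3 : b ≤ 3 := by
        by_contra hx
        push_neg at hx
        have h1 := rle' (m := b) 4 (by norm_num) (by exact_mod_cast (show (4:ℤ) ≤ b by omega))
        have h2 := rle' (m := c) 4 (by norm_num) (by exact_mod_cast (show (4:ℤ) ≤ c by omega))
        norm_num at hsum
        linarith
      have hbeq : b = 3 := by omega
      subst hbeq
      have hc3 : c ≤ 3 := by
        by_contra hx
        push_neg at hx
        have h1 := rle' (m := c) 4 (by norm_num) (by exact_mod_cast (show (4:ℤ) ≤ c by omega))
        norm_num at hsum
        linarith
      have : c = 3 := by omega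
      subst this
      exact Or.inr (Or.inr (Or.inr (Or.inr (Or.inr (Or.inr (Or.inr (Or.inr (Or.inr (Or.inl rfl)))))))))
  -- quadruple case
  swap
  · simp at hcard; omega
  · have ha2 : (2:ℤ) ≤ a := hS a (by simp)
    have hb2 : (2:ℤ) ≤ b := hS b (by simp)
    have hc2 : (2:ℤ) ≤ c := hS c (by simp)
    have hd2 : (2:ℤ) ≤ d := hS d (by simp)
    simp [List.pairwise_cons] at hsort
    obtain ⟨⟨hab, hac, had⟩, ⟨hbc, hbd⟩, hcd⟩ := hsort
    simp at hχ
    simp only [← one_div] at hχ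
    have hsum : 2 ≤ 1/(a:ℚ) + 1/(b:ℚ) + 1/(c:ℚ) + 1/(d:ℚ) := by linarith
    have hd2' : d ≤ 2 := by
      by_contra hx
      push_neg at hx
      have h1 := rle' (m := d) 3 (by norm_num) (by exact_mod_cast (show (3:ℤ) ≤ d by omega))
      have := rh ha2
      have := rh hb2
      have := rh hc2
      linarith
    have : a = 2 ∧ b = 2 ∧ c = 2 ∧ d = 2 := by omega
    obtain ⟨rfl, rfl, rfl, rfl⟩ := this
    exact Or.inr (Or.inr (Or.inr (Or.inr (Or.inr (Or.inr (Or.inr (Or.inr (Or.inr (Or.inr rfl)))))))))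


lemma spor_cases (T : Multiset ℤ) (hT : ∀ m ∈ T, (2:ℤ) ≤ m)
    (hTχ : (T.map (fun m : ℤ => 1 - 1 / (m : ℚ))).sum ≤ 2) {v : ℚ} (hv : spor v)
    (h : (T.map (fun m : ℤ => (m:ℚ) + 1/m - 2)).sum = v) :
    (T = {2,3,3} ∧ v = 19/6) ∨ (T = {2,3,4} ∧ v = 49/12) ∨ (T = {2,3,5} ∧ v = 151/30) ∨
    (T = {2,3,6} ∧ v = 6) ∨ (T = {2,4,4} ∧ v = 5) ∨ (T = {3,3,3} ∧ v = 4) ∨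
    (T = {2,2,2,2} ∧ v = 2) := by
  rcases classify T hT hTχ with rfl | ⟨p, hp, rfl⟩ | ⟨p, q, hp, hq, rfl⟩ | ⟨p, hp, rfl⟩ |
    rfl | rfl | rfl | rfl | rfl | rfl | rfl
  · exfalso; simp at h
    rcases hv with rfl|rfl|rfl|rfl|rfl|rfl|rfl <;> norm_num at h
  · exfalso; simp at h; simp only [← one_div] at h
    exact sing_spor hp v hv (by linarith)
  · exfalso; simp at h; simp only [← one_div] at h
    exact pair_spor hp hq v hv (by linarith)
  · exfalso; simp at h; simp only [← one_div] at h
    exact t22_spor hp v hv (by linarith)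
  · exact Or.inl ⟨rfl, by norm_num at h; linarith⟩
  · exact Or.inr (Or.inl ⟨rfl, by norm_num at h; linarith⟩)
  · exact Or.inr (Or.inr (Or.inl ⟨rfl, by norm_num at h; linarith⟩))
  · exact Or.inr (Or.inr (Or.inr (Or.inl ⟨rfl, by norm_num at h; linarith⟩)))
  · exact Or.inr (Or.inr (Or.inr (Or.inr (Or.inl ⟨rfl, by norm_num at h; linarith⟩))))
  · exact Or.inr (Or.inr (Or.inr (Or.inr (Or.inr (Or.inl ⟨rfl, by norm_num at h; linarith⟩)))))
  · exact Or.inr (Or.inr (Or.inr (Or.inr (Or.inr (Or.inr ⟨rfl, by norm_num at h; linarith⟩)))))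

end ConeOrderAux

open ConeOrderAux

/-- Arithmetic core of Theorem 5.10: if `S` and `T` are finite multisets of
integers `≥ 2` with `∑_{m∈S}(1 - 1/m) ≤ 2` and `∑_{m∈T}(1 - 1/m) ≤ 2` (i.e.
both corresponding orbifolds have nonnegative Euler characteristic), and
`∑_{m∈S}(m + 1/m - 2) = ∑_{m∈T}(m + 1/m - 2)`, then `S = T`. -/
theorem multiset_cone_orders_determined (S T : Multiset ℤ)
    (hS : ∀ m ∈ S, (2 : ℤ) ≤ m) (hT : ∀ m ∈ T, (2 : ℤ) ≤ m)
    (hSχ : (S.map (fun m => 1 - 1 / (m : ℚ))).sum ≤ 2)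
    (hTχ : (T.map (fun m => 1 - 1 / (m : ℚ))).sum ≤ 2)
    (h : (S.map (fun m => (m : ℚ) + 1 / m - 2)).sum
        = (T.map (fun m => (m : ℚ) + 1 / m - 2)).sum) :
    S = T := by
  rw [coe_sum_eq] at hSχ hTχ
  rw [coe_sum_eq2 S, coe_sum_eq2 T] at h
  rcases classify S hS hSχ with rfl | ⟨m, hm, rfl⟩ | ⟨m, n, hm, hn, rfl⟩ | ⟨m, hm, rfl⟩ |
    rfl | rfl | rfl | rfl | rfl | rfl | rfl
  -- S = 0
  · rcases classify T hT hTχ with rfl | ⟨p, hp, rfl⟩ | ⟨p, q, hp, hq, rfl⟩ | ⟨p, hp, rfl⟩ |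
      rfl | rfl | rfl | rfl | rfl | rfl | rfl
    · rfl
    · exfalso; simp at h; simp only [← one_div] at h; have := Fge hp; linarith
    · exfalso; simp at h; simp only [← one_div] at h
      have := Fge hp; have := Fge hq; linarith
    · exfalso; simp at h; simp only [← one_div] at h; have := Fge hp; linarith
    all_goals (exfalso; norm_num at h)
  -- S = {m}
  · rcases classify T hT hTχ with rfl | ⟨p, hp, rfl⟩ | ⟨p, q, hp, hq, rfl⟩ | ⟨p, hp, rfl⟩ |
      rfl | rfl | rfl | rfl | rfl | rfl | rfl
    · exfalso; simp at h; simp only [← one_div] at h; have := Fge hm; linarith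
    · simp at h; simp only [← one_div] at h
      obtain rfl := sing_sing hm hp (by linarith); rfl
    · exfalso; simp at h; simp only [← one_div] at h
      exact sing_pair hm hp hq (by linarith)
    · exfalso; simp at h; simp only [← one_div] at h
      exact t22_sing hp hm (by linarith)
    · exfalso; simp at h; simp only [← one_div] at h
      exact sing_spor hm (19/6) (by norm_num [spor]) (by linarith)
    · exfalso; simp at h; simp only [← one_div] at h
      exact sing_spor hm (49/12) (by norm_num [spor]) (by linarith)
    · exfalso; simp at h; simp only [← one_div] at h
      exact sing_spor hm (151/30) (by norm_num [spor]) (by linarith)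
    · exfalso; simp at h; simp only [← one_div] at h
      exact sing_spor hm 6 (by norm_num [spor]) (by linarith)
    · exfalso; simp at h; simp only [← one_div] at h
      exact sing_spor hm 5 (by norm_num [spor]) (by linarith)
    · exfalso; simp at h; simp only [← one_div] at h
      exact sing_spor hm 4 (by norm_num [spor]) (by linarith)
    · exfalso; simp at h; simp only [← one_div] at h
      exact sing_spor hm 2 (by norm_num [spor]) (by linarith)
  -- S = {m, n}
  · rcases classify T hT hTχ with rfl | ⟨p, hp, rfl⟩ | ⟨p, q, hp, hq, rfl⟩ | ⟨p, hp, rfl⟩ |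
      rfl | rfl | rfl | rfl | rfl | rfl | rfl
    · exfalso; simp at h; simp only [← one_div] at h
      have := Fge hm; have := Fge hn; linarith
    · exfalso; simp at h; simp only [← one_div] at h
      exact sing_pair hp hm hn (by linarith)
    · simp at h; simp only [← one_div] at h
      rcases pair_pair hm hn hp hq (by linarith) with ⟨rfl, rfl⟩ | ⟨rfl, rfl⟩
      · rfl
      · exact Multiset.pair_comm _ _
    · exfalso; simp at h; simp only [← one_div] at h
      exact t22_pair hp hm hn (by linarith)
    · exfalso; simp at h; simp only [← one_div] at h
      exact pair_spor hm hn (19/6) (by norm_num [spor]) (by linarith)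
    · exfalso; simp at h; simp only [← one_div] at h
      exact pair_spor hm hn (49/12) (by norm_num [spor]) (by linarith)
    · exfalso; simp at h; simp only [← one_div] at h
      exact pair_spor hm hn (151/30) (by norm_num [spor]) (by linarith)
    · exfalso; simp at h; simp only [← one_div] at h
      exact pair_spor hm hn 6 (by norm_num [spor]) (by linarith)
    · exfalso; simp at h; simp only [← one_div] at h
      exact pair_spor hm hn 5 (by norm_num [spor]) (by linarith)
    · exfalso; simp at h; simp only [← one_div] at h
      exact pair_spor hm hn 4 (by norm_num [spor]) (by linarith)
    · exfalso; simp at h; simp only [← one_div] at h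
      exact pair_spor hm hn 2 (by norm_num [spor]) (by linarith)
  -- S = {2, 2, m}
  · rcases classify T hT hTχ with rfl | ⟨p, hp, rfl⟩ | ⟨p, q, hp, hq, rfl⟩ | ⟨p, hp, rfl⟩ |
      rfl | rfl | rfl | rfl | rfl | rfl | rfl
    · exfalso; simp at h; simp only [← one_div] at h; have := Fge hm; linarith
    · exfalso; simp at h; simp only [← one_div] at h
      exact t22_sing hm hp (by linarith)
    · exfalso; simp at h; simp only [← one_div] at h
      exact t22_pair hm hp hq (by linarith)
    · simp at h; simp only [← one_div] at h
      obtain rfl := sing_sing hm hp (by linarith); rfl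
    · exfalso; simp at h; simp only [← one_div] at h
      exact t22_spor hm (19/6) (by norm_num [spor]) (by linarith)
    · exfalso; simp at h; simp only [← one_div] at h
      exact t22_spor hm (49/12) (by norm_num [spor]) (by linarith)
    · exfalso; simp at h; simp only [← one_div] at h
      exact t22_spor hm (151/30) (by norm_num [spor]) (by linarith)
    · exfalso; simp at h; simp only [← one_div] at h
      exact t22_spor hm 6 (by norm_num [spor]) (by linarith)
    · exfalso; simp at h; simp only [← one_div] at h
      exact t22_spor hm 5 (by norm_num [spor]) (by linarith)
    · exfalso; simp at h; simp only [← one_div] at h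
      exact t22_spor hm 4 (by norm_num [spor]) (by linarith)
    · exfalso; simp at h; simp only [← one_div] at h
      exact t22_spor hm 2 (by norm_num [spor]) (by linarith)
  -- S sporadic (7 rows)
  · rw [show (Multiset.map (fun m : ℤ => (m:ℚ) + 1/m - 2) ({2,3,3} : Multiset ℤ)).sum
        = 19/6 from by norm_num] at h
    rcases spor_cases T hT hTχ (by norm_num [spor]) h.symm with
      ⟨rfl,h'⟩|⟨rfl,h'⟩|⟨rfl,h'⟩|⟨rfl,h'⟩|⟨rfl,h'⟩|⟨rfl,h'⟩|⟨rfl,h'⟩ <;>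
      first | rfl | norm_num at h'
  · rw [show (Multiset.map (fun m : ℤ => (m:ℚ) + 1/m - 2) ({2,3,4} : Multiset ℤ)).sum
        = 49/12 from by norm_num] at h
    rcases spor_cases T hT hTχ (by norm_num [spor]) h.symm with
      ⟨rfl,h'⟩|⟨rfl,h'⟩|⟨rfl,h'⟩|⟨rfl,h'⟩|⟨rfl,h'⟩|⟨rfl,h'⟩|⟨rfl,h'⟩ <;>
      first | rfl | norm_num at h'
  · rw [show (Multiset.map (fun m : ℤ => (m:ℚ) + 1/m - 2) ({2,3,5} : Multiset ℤ)).sum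
        = 151/30 from by norm_num] at h
    rcases spor_cases T hT hTχ (by norm_num [spor]) h.symm with
      ⟨rfl,h'⟩|⟨rfl,h'⟩|⟨rfl,h'⟩|⟨rfl,h'⟩|⟨rfl,h'⟩|⟨rfl,h'⟩|⟨rfl,h'⟩ <;>
      first | rfl | norm_num at h'
  · rw [show (Multiset.map (fun m : ℤ => (m:ℚ) + 1/m - 2) ({2,3,6} : Multiset ℤ)).sum
        = 6 from by norm_num] at h
    rcases spor_cases T hT hTχ (by norm_num [spor]) h.symm with
      ⟨rfl,h'⟩|⟨rfl,h'⟩|⟨rfl,h'⟩|⟨rfl,h'⟩|⟨rfl,h'⟩|⟨rfl,h'⟩|⟨rfl,h'⟩ <;>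
      first | rfl | norm_num at h'
  · rw [show (Multiset.map (fun m : ℤ => (m:ℚ) + 1/m - 2) ({2,4,4} : Multiset ℤ)).sum
        = 5 from by norm_num] at h
    rcases spor_cases T hT hTχ (by norm_num [spor]) h.symm with
      ⟨rfl,h'⟩|⟨rfl,h'⟩|⟨rfl,h'⟩|⟨rfl,h'⟩|⟨rfl,h'⟩|⟨rfl,h'⟩|⟨rfl,h'⟩ <;>
      first | rfl | norm_num at h'
  · rw [show (Multiset.map (fun m : ℤ => (m:ℚ) + 1/m - 2) ({3,3,3} : Multiset ℤ)).sum
        = 4 from by norm_num] at h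
    rcases spor_cases T hT hTχ (by norm_num [spor]) h.symm with
      ⟨rfl,h'⟩|⟨rfl,h'⟩|⟨rfl,h'⟩|⟨rfl,h'⟩|⟨rfl,h'⟩|⟨rfl,h'⟩|⟨rfl,h'⟩ <;>
      first | rfl | norm_num at h'
  · rw [show (Multiset.map (fun m : ℤ => (m:ℚ) + 1/m - 2) ({2,2,2,2} : Multiset ℤ)).sum
        = 2 from by norm_num] at h
    rcases spor_cases T hT hTχ (by norm_num [spor]) h.symm with
      ⟨rfl,h'⟩|⟨rfl,h'⟩|⟨rfl,h'⟩|⟨rfl,h'⟩|⟨rfl,h'⟩|⟨rfl,h'⟩|⟨rfl,h'⟩ <;>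
      first | rfl | norm_num at h'
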